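/- The linear map L satisfies: (i) det L = 1; (ii) (L J)·k = κ J_n for every J = (Ĵ, J_n) ∈ ℝ^{n−1}×ℝ; (iii) ‖L J‖² = κ J_n² + ‖π_k^⊥(Âᵀ Ĵ)‖² for every J. Moreover, if in addition k ∈ ℤⁿ, Â has integer entries and max_{i,j}|Â_{ij}| ≤ max_j|k_j|, then there exists a constant c > 0 depending only on n such that the operator norms satisfy ‖L‖ ≤ c‖k‖ and ‖L⁻¹‖ ≤ c‖k‖^{n−1}. -/

import Mathlib

open scoped Matrix

/-- Euclidean norm on `Fin n → ℝ`. -/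
noncomputable def enorm' {n : ℕ} (y : Fin n → ℝ) : ℝ := Real.sqrt (∑ i, y i ^ 2)

/-- Euclidean dot product on `Fin n → ℝ`. -/
def edot {n : ℕ} (x y : Fin n → ℝ) : ℝ := ∑ i, x i * y i

/-- Orthogonal projection onto the hyperplane orthogonal to `k`:
`π_k^⊥ y = y − κ⁻¹ (y·k) k` with `κ = ‖k‖²`. -/
noncomputable def eproj {n : ℕ} (k y : Fin n → ℝ) : Fin n → ℝ :=
  y - ((∑ i, k i ^ 2)⁻¹ * edot y k) • k

/-- The linear map `L : ℝⁿ → ℝⁿ`, `L(Ĵ, J_n) = J_n k + π_k^⊥(Âᵀ Ĵ)`, viewed as an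
endomorphism of `ℝⁿ` (identifying `J` with `(Ĵ, J_n)`, `Ĵ` the first `n−1` coordinates). -/
noncomputable def Lfull {m : ℕ} (k : Fin (m + 1) → ℝ)
    (Ahat : Matrix (Fin m) (Fin (m + 1)) ℝ) :
    (Fin (m + 1) → ℝ) → Fin (m + 1) → ℝ :=
  fun J => J (Fin.last m) • k + eproj k (Ahatᵀ.mulVec fun i : Fin m => J i.castSucc)

/-! ### Auxiliary lemmas -/

/-- Explicit matrix of `Lfull`. -/
noncomputable def Mmat {m : ℕ} (k : Fin (m + 1) → ℝ)
    (Ahat : Matrix (Fin m) (Fin (m + 1)) ℝ) : Matrix (Fin (m + 1)) (Fin (m + 1)) ℝ :=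
  fun i j => if h : (j : ℕ) < m then
      Ahat ⟨j, h⟩ i - ((∑ i, k i ^ 2)⁻¹ * edot (Ahat ⟨j, h⟩) k) * k i
    else k i

lemma mulVec_Mmat {m : ℕ} (k : Fin (m + 1) → ℝ) (Ahat : Matrix (Fin m) (Fin (m + 1)) ℝ)
    (J : Fin (m + 1) → ℝ) : (Mmat k Ahat).mulVec J = Lfull k Ahat J := by
  funext i
  have hlast : ¬ ((Fin.last m : Fin (m+1)) : ℕ) < m := by simp
  simp only [Matrix.mulVec, dotProduct, Lfull, eproj, edot, Mmat, Pi.add_apply,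
    Pi.sub_apply, Pi.smul_apply, smul_eq_mul, Matrix.transpose_apply]
  rw [Fin.sum_univ_castSucc]
  simp only [Fin.coe_castSucc, Fin.is_lt, dite_true, hlast, dite_false, Fin.eta]
  have h1 : ∑ j : Fin m, (Ahat j i - (∑ i, k i ^ 2)⁻¹ * (∑ l, Ahat j l * k l) * k i) * J j.castSucc
      = (∑ j : Fin m, Ahat j i * J j.castSucc)
        - (∑ i, k i ^ 2)⁻¹ * (∑ j : Fin m, (∑ l, Ahat j l * k l) * J j.castSucc) * k i := by
    simp only [sub_mul, Finset.sum_sub_distrib]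
    congr 1
    rw [Finset.mul_sum, Finset.sum_mul]
    exact Finset.sum_congr rfl fun j _ => by ring
  rw [h1]
  have h2 : ∑ l, (∑ j : Fin m, Ahat j l * J j.castSucc) * k l
      = ∑ j : Fin m, (∑ l, Ahat j l * k l) * J j.castSucc := by
    simp only [Finset.sum_mul]
    rw [Finset.sum_comm]
    exact Finset.sum_congr rfl fun j _ => Finset.sum_congr rfl fun l _ => by ring
  rw [h2]; ring

lemma det_Mmat {m : ℕ} (k : Fin (m + 1) → ℝ) (Ahat : Matrix (Fin m) (Fin (m + 1)) ℝ)
    (hdet : (Matrix.of fun (i j : Fin (m + 1)) =>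
        if h : (i : ℕ) < m then Ahat ⟨i, h⟩ j else k j).det = 1) :
    (Mmat k Ahat).det = 1 := by
  set N : Matrix (Fin (m+1)) (Fin (m+1)) ℝ :=
    Matrix.of fun (i j : Fin (m + 1)) => if h : (i : ℕ) < m then Ahat ⟨i, h⟩ j else k j with hN
  set c : Fin (m+1) → ℝ := fun j =>
    if h : (j : ℕ) < m then (∑ i, k i ^ 2)⁻¹ * edot (Ahat ⟨j, h⟩) k else 0 with hc
  set E : Matrix (Fin (m+1)) (Fin (m+1)) ℝ :=
    fun l j => (if l = j then 1 else 0) + (if l = Fin.last m then -(c j) else 0) with hE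
  have hclast : c (Fin.last m) = 0 := by simp [hc]
  have hfact : Mmat k Ahat = Nᵀ * E := by
    ext i j
    have step : ∀ l : Fin (m+1), Nᵀ i l * E l j
        = (if l = j then N l i else 0) + (if l = Fin.last m then N l i * -(c j) else 0) := by
      intro l
      simp only [hE, Matrix.transpose_apply]
      rw [mul_add, mul_ite, mul_one, mul_zero, mul_ite, mul_zero]
    rw [Matrix.mul_apply, Finset.sum_congr rfl fun l _ => step l, Finset.sum_add_distrib,
      Finset.sum_ite_eq', Finset.sum_ite_eq']
    simp only [Finset.mem_univ, if_true]
    by_cases h : (j : ℕ) < m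
    · have hlast : ¬ ((Fin.last m : Fin (m+1)) : ℕ) < m := by simp
      simp only [Mmat, hN, hc, Matrix.of_apply, dif_pos h, dif_neg hlast]
      ring
    · have hj : j = Fin.last m := by
        apply Fin.ext
        have := j.isLt
        simp only [Fin.val_last]
        omega
      simp [Mmat, hN, hc, h, hj, hclast]
  rw [hfact, Matrix.det_mul, Matrix.det_transpose, hdet, one_mul]
  have hEtri : E.BlockTriangular OrderDual.toDual := by
    intro i j hij
    have hlt : i < j := hij
    have h1 : i ≠ j := ne_of_lt hlt
    have h2 : i ≠ Fin.last m := by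
      intro h; exact absurd (Fin.le_last j) (not_le.mpr (h ▸ hlt))
    simp [hE, h1, h2]
  rw [Matrix.det_of_lowerTriangular E hEtri]
  apply Finset.prod_eq_one
  intro l _
  by_cases h : l = Fin.last m <;> simp [hE, h, hclast]

lemma kappa_pos {n : ℕ} {k : Fin n → ℝ} (hk : k ≠ 0) : 0 < ∑ i, k i ^ 2 := by
  obtain ⟨i, hi⟩ := Function.ne_iff.mp hk
  have : (0:ℝ) < k i ^ 2 := by
    rcases (sq_nonneg (k i)).lt_or_eq with h | h
    · exact h
    · exact absurd (pow_eq_zero_iff two_ne_zero |>.mp h.symm) hi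
  exact lt_of_lt_of_le this (Finset.single_le_sum (fun j _ => sq_nonneg (k j)) (Finset.mem_univ i))

lemma edot_eproj {n : ℕ} {k : Fin n → ℝ} (hk : k ≠ 0) (y : Fin n → ℝ) :
    edot (eproj k y) k = 0 := by
  have hκ := (kappa_pos hk).ne'
  simp only [eproj, edot, Pi.sub_apply, Pi.smul_apply, smul_eq_mul]
  rw [Finset.sum_congr rfl fun i _ => sub_mul (y i) _ (k i), Finset.sum_sub_distrib]
  have h3 : ∀ x, ((∑ i, k i ^ 2)⁻¹ * (∑ i, y i * k i)) * k x * k x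
      = ((∑ i, k i ^ 2)⁻¹ * (∑ i, y i * k i)) * (k x ^ 2) := fun x => by ring
  rw [Finset.sum_congr rfl fun x _ => h3 x, ← Finset.mul_sum]
  field_simp; ring

lemma sq_enorm' {n : ℕ} (y : Fin n → ℝ) : enorm' y ^ 2 = ∑ i, y i ^ 2 := by
  unfold enorm'
  rw [Real.sq_sqrt (Finset.sum_nonneg fun i _ => sq_nonneg _)]

lemma enorm'_nonneg {n : ℕ} (y : Fin n → ℝ) : 0 ≤ enorm' y := Real.sqrt_nonneg _

lemma pythagoras {m : ℕ} {k : Fin (m+1) → ℝ} (hk : k ≠ 0)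
    (Ahat : Matrix (Fin m) (Fin (m + 1)) ℝ) (J : Fin (m + 1) → ℝ) :
    enorm' (Lfull k Ahat J) ^ 2 =
      (∑ i, k i ^ 2) * J (Fin.last m) ^ 2 +
        enorm' (eproj k (Ahatᵀ.mulVec fun i : Fin m => J i.castSucc)) ^ 2 := by
  set p := eproj k (Ahatᵀ.mulVec fun i : Fin m => J i.castSucc) with hp
  have hop : edot p k = 0 := edot_eproj hk _
  rw [sq_enorm', sq_enorm']
  simp only [Lfull, ← hp, Pi.add_apply, Pi.smul_apply, smul_eq_mul]
  have expand : ∀ i, (J (Fin.last m) * k i + p i)^2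
      = J (Fin.last m)^2 * k i ^2 + 2 * J (Fin.last m) * (p i * k i) + p i ^2 := fun i => by ring
  rw [Finset.sum_congr rfl fun i _ => expand i, Finset.sum_add_distrib, Finset.sum_add_distrib,
    ← Finset.mul_sum, ← Finset.mul_sum]
  rw [show (∑ i, p i * k i) = edot p k from rfl, hop]
  ring

lemma edot_Lfull {m : ℕ} {k : Fin (m+1) → ℝ} (hk : k ≠ 0)
    (Ahat : Matrix (Fin m) (Fin (m + 1)) ℝ) (J : Fin (m + 1) → ℝ) :
    edot (Lfull k Ahat J) k = (∑ i, k i ^ 2) * J (Fin.last m) := by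
  set p := eproj k (Ahatᵀ.mulVec fun i : Fin m => J i.castSucc) with hp
  have hop : edot p k = 0 := edot_eproj hk _
  simp only [Lfull, ← hp, edot, Pi.add_apply, Pi.smul_apply, smul_eq_mul]
  rw [Finset.sum_congr rfl fun i _ => add_mul (J (Fin.last m) * k i) (p i) (k i),
    Finset.sum_add_distrib]
  rw [show (∑ i, p i * k i) = edot p k from rfl, hop, add_zero]
  have : ∑ i, J (Fin.last m) * k i * k i = J (Fin.last m) * ∑ i, k i ^2 := by
    rw [Finset.mul_sum]; exact Finset.sum_congr rfl fun i _ => by ring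
  rw [this]; ring

lemma coord_le_enorm' {n : ℕ} (y : Fin n → ℝ) (i : Fin n) : |y i| ≤ enorm' y := by
  rw [← Real.sqrt_sq_eq_abs]
  exact Real.sqrt_le_sqrt (Finset.single_le_sum (fun j _ => sq_nonneg (y j)) (Finset.mem_univ i))

lemma enorm'_le_card_mul {n : ℕ} (y : Fin n → ℝ) {b : ℝ} (hb : 0 ≤ b)
    (h : ∀ i, |y i| ≤ b) : enorm' y ≤ n * b := by
  have h1 : ∑ i, y i ^ 2 ≤ (n : ℝ) * b ^ 2 := by
    calc ∑ i, y i ^ 2 ≤ ∑ _i : Fin n, b ^ 2 := by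
          refine Finset.sum_le_sum fun i _ => ?_
          rw [← sq_abs]
          exact pow_le_pow_left₀ (abs_nonneg _) (h i) 2
      _ = (n : ℝ) * b ^ 2 := by simp [Finset.sum_const, nsmul_eq_mul]
  have h2 : (n : ℝ) * b ^ 2 ≤ ((n : ℝ) * b) ^ 2 := by
    have : (n:ℝ) ≤ (n:ℝ)^2 := by
      rcases Nat.eq_zero_or_pos n with h | h
      · simp [h]
      · have h1 : (1:ℝ) ≤ (n:ℝ) := by exact_mod_cast h
        nlinarith
    nlinarith [sq_nonneg b]
  calc enorm' y ≤ Real.sqrt (((n:ℝ) * b)^2) := Real.sqrt_le_sqrt (h1.trans h2)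
    _ = (n:ℝ) * b := Real.sqrt_sq (by positivity)

lemma enorm'_eproj_le {n : ℕ} {k : Fin n → ℝ} (hk : k ≠ 0) (y : Fin n → ℝ) :
    enorm' (eproj k y) ≤ enorm' y := by
  apply Real.sqrt_le_sqrt
  have hκ := kappa_pos hk
  simp only [eproj, Pi.sub_apply, Pi.smul_apply, smul_eq_mul]
  set c := (∑ i, k i ^ 2)⁻¹ * edot y k with hc
  have expand : ∀ i, (y i - c * k i)^2 = y i ^2 - 2 * c * (y i * k i) + c^2 * k i ^2 :=
    fun i => by ring
  rw [Finset.sum_congr rfl fun i _ => expand i, Finset.sum_add_distrib, Finset.sum_sub_distrib,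
    ← Finset.mul_sum, ← Finset.mul_sum]
  have hS : ∑ i, y i * k i = edot y k := rfl
  rw [hS, hc]
  have hκ' : (∑ i, k i ^ 2) ≠ 0 := hκ.ne'
  have : ((∑ i, k i ^ 2)⁻¹ * edot y k) ^ 2 * ∑ i, k i ^ 2
      = (edot y k)^2 * (∑ i, k i ^ 2)⁻¹ := by field_simp
  rw [this]
  have h2 : 2 * ((∑ i, k i ^ 2)⁻¹ * edot y k) * edot y k
      = 2 * ((edot y k)^2 * (∑ i, k i ^ 2)⁻¹) := by ring
  rw [h2]
  have hnn : 0 ≤ (edot y k)^2 * (∑ i, k i ^ 2)⁻¹ := by positivity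
  linarith
lemma sup_abs_le_enorm' {n : ℕ} [NeZero n] (k : Fin n → ℝ) : (⨆ j', |k j'|) ≤ enorm' k :=
  ciSup_le fun j => coord_le_enorm' k j

lemma Lfull_forward_bound {m : ℕ} {k : Fin (m+1) → ℝ} (hk : k ≠ 0)
    (Ahat : Matrix (Fin m) (Fin (m + 1)) ℝ)
    (hbd : ∀ i j, |Ahat i j| ≤ ⨆ j', |k j'|) (J : Fin (m + 1) → ℝ) :
    enorm' (Lfull k Ahat J) ≤ (((m:ℝ)+1) * m + 1) * enorm' k * enorm' J := by
  set w : Fin (m+1) → ℝ := Ahatᵀ.mulVec (fun i : Fin m => J i.castSucc) with hw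
  have hK : (⨆ j', |k j'|) ≤ enorm' k := sup_abs_le_enorm' k
  have ha : 0 ≤ enorm' k * enorm' J :=
    mul_nonneg (enorm'_nonneg k) (enorm'_nonneg J)
  have hwent : ∀ i, |w i| ≤ (m:ℝ) * (enorm' k * enorm' J) := by
    intro i
    have : w i = ∑ j : Fin m, Ahat j i * J j.castSucc := by
      simp [hw, Matrix.mulVec, dotProduct, Matrix.transpose_apply]
    rw [this]
    calc |∑ j : Fin m, Ahat j i * J j.castSucc|
        ≤ ∑ j : Fin m, |Ahat j i * J j.castSucc| := Finset.abs_sum_le_sum_abs _ _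
      _ ≤ ∑ _j : Fin m, enorm' k * enorm' J := by
          refine Finset.sum_le_sum fun j _ => ?_
          rw [abs_mul]
          exact mul_le_mul ((hbd j i).trans hK) (coord_le_enorm' J _)
            (abs_nonneg _) (enorm'_nonneg k)
      _ = (m:ℝ) * (enorm' k * enorm' J) := by simp [Finset.sum_const, nsmul_eq_mul]
  have hwn : enorm' w ≤ ((m:ℝ)+1) * ((m:ℝ) * (enorm' k * enorm' J)) := by
    have := enorm'_le_card_mul w (by positivity) hwent
    simpa using this
  have hpw : enorm' (eproj k w) ≤ enorm' w := enorm'_eproj_le hk w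
  have hP : enorm' (eproj k w) ≤ ((m:ℝ)+1) * (m:ℝ) * (enorm' k * enorm' J) := by
    exact (hpw.trans hwn).trans (le_of_eq (by ring))
  have hP0 : 0 ≤ enorm' (eproj k w) := enorm'_nonneg _
  have hgoal0 : 0 ≤ (((m:ℝ)+1) * m + 1) * enorm' k * enorm' J :=
    mul_nonneg (mul_nonneg (by positivity) (enorm'_nonneg k)) (enorm'_nonneg J)
  refine le_of_pow_le_pow_left₀ two_ne_zero hgoal0 ?_
  rw [pythagoras hk Ahat J]
  have hκ : (∑ i, k i ^ 2) = enorm' k ^ 2 := (sq_enorm' k).symm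
  have hJl : J (Fin.last m) ^ 2 ≤ enorm' J ^ 2 := by
    rw [← sq_abs (J (Fin.last m))]
    exact pow_le_pow_left₀ (abs_nonneg _) (coord_le_enorm' J _) 2
  have h1 : (∑ i, k i ^ 2) * J (Fin.last m) ^ 2 ≤ (enorm' k * enorm' J) ^ 2 := by
    rw [hκ, mul_pow]
    exact mul_le_mul_of_nonneg_left hJl (sq_nonneg _)
  have h2 : enorm' (eproj k w) ^ 2 ≤ (((m:ℝ)+1) * (m:ℝ) * (enorm' k * enorm' J)) ^ 2 :=
    pow_le_pow_left₀ hP0 hP 2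
  have hm0 : (0:ℝ) ≤ ((m:ℝ)+1) * m := by positivity
  nlinarith [sq_nonneg (enorm' k * enorm' J), h1, h2, hm0, ha]

lemma Mmat_entry_bound {m : ℕ} {k : Fin (m+1) → ℝ} (hk : k ≠ 0)
    (Ahat : Matrix (Fin m) (Fin (m + 1)) ℝ)
    (hbd : ∀ i j, |Ahat i j| ≤ ⨆ j', |k j'|) (i j : Fin (m+1)) :
    |Mmat k Ahat i j| ≤ ((m:ℝ) + 2) * enorm' k := by
  have hK : (⨆ j', |k j'|) ≤ enorm' k := sup_abs_le_enorm' k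
  have hkn := enorm'_nonneg k
  have hκ : (∑ i, k i ^ 2) = enorm' k ^ 2 := (sq_enorm' k).symm
  have hκpos := kappa_pos hk
  unfold Mmat
  split
  case isTrue h =>
    have hA : |Ahat ⟨j, h⟩ i| ≤ enorm' k := (hbd _ _).trans hK
    have hedot : |edot (Ahat ⟨j, h⟩) k| ≤ ((m:ℝ)+1) * (enorm' k * enorm' k) := by
      calc |edot (Ahat ⟨j, h⟩) k| ≤ ∑ l, |Ahat ⟨j, h⟩ l * k l| := Finset.abs_sum_le_sum_abs _ _
        _ ≤ ∑ _l : Fin (m+1), enorm' k * enorm' k := by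
            refine Finset.sum_le_sum fun l _ => ?_
            rw [abs_mul]
            exact mul_le_mul ((hbd _ _).trans hK) (coord_le_enorm' k l) (abs_nonneg _) hkn
        _ = ((m:ℝ)+1) * (enorm' k * enorm' k) := by
            simp only [Finset.sum_const, Finset.card_univ, Fintype.card_fin, nsmul_eq_mul]
            push_cast; ring
    have hedot' : |edot (Ahat ⟨j, h⟩) k| ≤ ((m:ℝ)+1) * (∑ i, k i ^ 2) := by
      rw [hκ]
      nlinarith [hedot]
    have hc : |(∑ i, k i ^ 2)⁻¹ * edot (Ahat ⟨j, h⟩) k| ≤ ((m:ℝ)+1) := by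
      rw [abs_mul, abs_inv, abs_of_pos hκpos]
      calc (∑ i, k i ^ 2)⁻¹ * |edot (Ahat ⟨j, h⟩) k|
          ≤ (∑ i, k i ^ 2)⁻¹ * (((m:ℝ)+1) * (∑ i, k i ^ 2)) :=
            mul_le_mul_of_nonneg_left hedot' (inv_nonneg.2 hκpos.le)
        _ = (m:ℝ)+1 := by field_simp
    have hki : |k i| ≤ enorm' k := coord_le_enorm' k i
    calc |Ahat ⟨j, h⟩ i - (∑ i, k i ^ 2)⁻¹ * edot (Ahat ⟨j, h⟩) k * k i|
        ≤ |Ahat ⟨j, h⟩ i| + |(∑ i, k i ^ 2)⁻¹ * edot (Ahat ⟨j, h⟩) k| * |k i| := by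
          rw [← abs_mul]; exact abs_sub _ _
      _ ≤ enorm' k + ((m:ℝ)+1) * enorm' k := by
          have := mul_le_mul hc hki (abs_nonneg _) (by positivity)
          linarith
      _ = ((m:ℝ)+2) * enorm' k := by ring
  case isFalse h =>
    have : |k i| ≤ enorm' k := coord_le_enorm' k i
    nlinarith

lemma adj_bound {m : ℕ} {k : Fin (m+1) → ℝ} (hk : k ≠ 0)
    (Ahat : Matrix (Fin m) (Fin (m + 1)) ℝ)
    (hbd : ∀ i j, |Ahat i j| ≤ ⨆ j', |k j'|) (i j : Fin (m+1)) :
    |(Mmat k Ahat).adjugate i j| ≤ (m.factorial : ℝ) * (((m:ℝ)+2) * enorm' k)^m := by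
  rw [Matrix.adjugate_fin_succ_eq_det_submatrix]
  rw [abs_mul, abs_pow, abs_neg, abs_one, one_pow, one_mul]
  have hsub : ∀ a b : Fin m,
      |((Mmat k Ahat).submatrix j.succAbove i.succAbove) a b| ≤ ((m:ℝ)+2) * enorm' k := by
    intro a b
    exact Mmat_entry_bound hk Ahat hbd _ _
  have := Matrix.det_le (abv := (AbsoluteValue.abs : AbsoluteValue ℝ ℝ)) hsub
  simpa [Fintype.card_fin, nsmul_eq_mul] using this

theorem stmt_4 (m : ℕ) (hm : 1 ≤ m) :
    (∀ (k : Fin (m + 1) → ℝ), k ≠ 0 →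
      ∀ Ahat : Matrix (Fin m) (Fin (m + 1)) ℝ,
        (Matrix.of fun (i j : Fin (m + 1)) =>
            if h : (i : ℕ) < m then Ahat ⟨i, h⟩ j else k j).det = 1 →
        -- (i) `det L = 1`
        ((∀ M : Matrix (Fin (m + 1)) (Fin (m + 1)) ℝ,
            (∀ J, M.mulVec J = Lfull k Ahat J) → M.det = 1) ∧
        -- (ii) `(L J)·k = κ J_n`
        (∀ J : Fin (m + 1) → ℝ,
            edot (Lfull k Ahat J) k = (∑ i, k i ^ 2) * J (Fin.last m)) ∧
        -- (iii) `‖L J‖² = κ J_n² + ‖π_k^⊥(Âᵀ Ĵ)‖²`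
        (∀ J : Fin (m + 1) → ℝ,
            enorm' (Lfull k Ahat J) ^ 2 =
              (∑ i, k i ^ 2) * J (Fin.last m) ^ 2 +
                enorm' (eproj k (Ahatᵀ.mulVec fun i : Fin m => J i.castSucc)) ^ 2))) ∧
    -- operator-norm bounds, with a constant depending only on `n`
    (∃ c : ℝ, 0 < c ∧
      ∀ (k : Fin (m + 1) → ℝ), k ≠ 0 →
      ∀ Ahat : Matrix (Fin m) (Fin (m + 1)) ℝ,
        (Matrix.of fun (i j : Fin (m + 1)) =>
            if h : (i : ℕ) < m then Ahat ⟨i, h⟩ j else k j).det = 1 →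
        (∀ j, ∃ z : ℤ, k j = (z : ℝ)) →
        (∀ i j, ∃ z : ℤ, Ahat i j = (z : ℝ)) →
        (∀ i j, |Ahat i j| ≤ ⨆ j', |k j'|) →
        -- `‖L‖ ≤ c ‖k‖`
        (∀ J : Fin (m + 1) → ℝ,
            enorm' (Lfull k Ahat J) ≤ c * enorm' k * enorm' J) ∧
        -- `L` is invertible and `‖L⁻¹‖ ≤ c ‖k‖^{n−1}`
        (∃ S : (Fin (m + 1) → ℝ) → Fin (m + 1) → ℝ,
            (∀ J, S (Lfull k Ahat J) = J) ∧ (∀ y, Lfull k Ahat (S y) = y) ∧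
            ∀ y : Fin (m + 1) → ℝ, enorm' (S y) ≤ c * enorm' k ^ m * enorm' y)) := by
  constructor
  · intro k hk Ahat hdet
    refine ⟨?_, fun J => edot_Lfull hk Ahat J, fun J => pythagoras hk Ahat J⟩
    intro M hM
    have hMeq : M = Mmat k Ahat := by
      ext i j
      have e1 : M i j * 1 = Lfull k Ahat (Pi.single j 1) i :=
        (congrFun (Matrix.mulVec_single M j 1) i).symm.trans (congrFun (hM _) i)
      have e2 : Mmat k Ahat i j * 1 = Lfull k Ahat (Pi.single j 1) i :=
        (congrFun (Matrix.mulVec_single (Mmat k Ahat) j 1) i).symm.trans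
          (congrFun (mulVec_Mmat k Ahat _) i)
      rw [mul_one] at e1 e2
      rw [e1, ← e2]
    rw [hMeq]
    exact det_Mmat k Ahat hdet
  · set c1 : ℝ := ((m:ℝ)+1) * m + 1 with hc1
    set c2 : ℝ := ((m:ℝ)+1)^2 * m.factorial * ((m:ℝ)+2)^m with hc2
    have hc1pos : 0 < c1 := by positivity
    have hc2pos : 0 < c2 := by positivity
    refine ⟨c1 + c2, by positivity, ?_⟩
    intro k hk Ahat hdet hkint hAint hbd
    have hkn := enorm'_nonneg k
    constructor
    · intro J
      have h1 := Lfull_forward_bound hk Ahat hbd J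
      have h2 : 0 ≤ enorm' k * enorm' J := mul_nonneg hkn (enorm'_nonneg J)
      nlinarith [mul_nonneg hc2pos.le h2]
    · have hdet1 : (Mmat k Ahat).det = 1 := det_Mmat k Ahat hdet
      refine ⟨fun y => ((Mmat k Ahat).adjugate).mulVec y, ?_, ?_, ?_⟩
      · intro J
        show ((Mmat k Ahat).adjugate).mulVec (Lfull k Ahat J) = J
        rw [← mulVec_Mmat, Matrix.mulVec_mulVec, Matrix.adjugate_mul, hdet1, one_smul,
          Matrix.one_mulVec]
      · intro y
        show Lfull k Ahat (((Mmat k Ahat).adjugate).mulVec y) = y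
        rw [← mulVec_Mmat, Matrix.mulVec_mulVec, Matrix.mul_adjugate, hdet1, one_smul,
          Matrix.one_mulVec]
      · intro y
        show enorm' (((Mmat k Ahat).adjugate).mulVec y) ≤ (c1 + c2) * enorm' k ^ m * enorm' y
        set B : ℝ := (m.factorial : ℝ) * (((m:ℝ)+2) * enorm' k)^m with hB
        have hBnn : 0 ≤ B := by positivity
        have hyn := enorm'_nonneg y
        have hcoord : ∀ i, |((Mmat k Ahat).adjugate).mulVec y i|
            ≤ ((m:ℝ)+1) * (B * enorm' y) := by
          intro i
          calc |((Mmat k Ahat).adjugate).mulVec y i|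
              = |∑ j, (Mmat k Ahat).adjugate i j * y j| := rfl
            _ ≤ ∑ j, |(Mmat k Ahat).adjugate i j * y j| := Finset.abs_sum_le_sum_abs _ _
            _ ≤ ∑ _j : Fin (m+1), B * enorm' y := by
                refine Finset.sum_le_sum fun j _ => ?_
                rw [abs_mul]
                exact mul_le_mul (adj_bound hk Ahat hbd i j) (coord_le_enorm' y j)
                  (abs_nonneg _) hBnn
            _ = ((m:ℝ)+1) * (B * enorm' y) := by
                simp only [Finset.sum_const, Finset.card_univ, Fintype.card_fin, nsmul_eq_mul]
                push_cast; ring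
        have hfin := enorm'_le_card_mul _ (by positivity) hcoord
        refine hfin.trans ?_
        have hexp : (((m:ℝ)+2) * enorm' k)^m = ((m:ℝ)+2)^m * enorm' k ^ m := mul_pow _ _ m
        have hknm : 0 ≤ enorm' k ^ m := by positivity
        have key : ((m:ℝ)+1) * (((m:ℝ)+1) * (B * enorm' y))
            = c2 * enorm' k ^ m * enorm' y := by
          rw [hB, hexp, hc2]; push_cast; ring
        rw [show ((↑(m+1) : ℝ)) = (m:ℝ)+1 by push_cast; ring, key]
        nlinarith [mul_nonneg (mul_nonneg hc1pos.le hknm) hyn]
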